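/- (Lemma 1.) Let n ≥ 0 and let P be a reverse-nonnegative path whose total sum is −n. Then there exist excursions E_1, …, E_{n+1} such that P = E_1 ++ [−1] ++ E_2 ++ [−1] ++ ⋯ ++ [−1] ++ E_{n+1}, and this factorization is unique; conversely, any path of this form is a reverse-nonnegative path with total sum −n. -/

import Mathlib

/-- A path is a finite list of integers all of whose entries are ≥ -1; entries ≥ 0 are
up steps and the entry -1 is the down step. -/
def IsPath (P : List ℤ) : Prop := ∀ s ∈ P, (-1 : ℤ) ≤ s

/-- A nonnegative path: a path all of whose prefix sums are ≥ 0. -/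
def NonnegPath (P : List ℤ) : Prop := IsPath P ∧ ∀ i : ℕ, 0 ≤ (P.take i).sum

/-- A positive path: a path all of whose nonempty prefix sums are > 0. -/
def PositivePath (P : List ℤ) : Prop :=
  IsPath P ∧ ∀ i : ℕ, 1 ≤ i → i ≤ P.length → 0 < (P.take i).sum

/-- An excursion: a nonnegative path with total sum 0. -/
def Excursion (P : List ℤ) : Prop := NonnegPath P ∧ P.sum = 0

/-- A reverse-nonnegative path: a path all of whose suffix sums (the empty suffix
allowed) are ≤ 0. -/
def RevNonnegPath (P : List ℤ) : Prop := IsPath P ∧ ∀ i : ℕ, (P.drop i).sum ≤ 0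

/-- (Lemma 1.) For `n ≥ 0`, a path `P` is a reverse-nonnegative path with total sum
`-n` if and only if it can be written, in exactly one way, as
`E₁ ++ [-1] ++ E₂ ++ [-1] ++ ⋯ ++ [-1] ++ E_{n+1}` with each `Eᵢ` an excursion. -/
def F (L : List (List ℤ)) : List ℤ := (List.intersperse [(-1:ℤ)] L).flatten

lemma F_single (E : List ℤ) : F [E] = E := by simp [F]

lemma F_cons (E : List ℤ) (L : List (List ℤ)) (h : L ≠ []) :
    F (E :: L) = E ++ (-1 : ℤ) :: F L := by
  obtain ⟨a, t, rfl⟩ := List.exists_cons_of_ne_nil h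
  simp [F]

lemma lemA : ∀ L : List (List ℤ), L ≠ [] → (∀ E ∈ L, Excursion E) →
    RevNonnegPath (F L) ∧ (F L).sum = -((L.length : ℤ) - 1) := by
  intro L
  induction L with
  | nil => intro h; exact absurd rfl h
  | cons E L ih =>
    intro _ hexc
    have hE : Excursion E := hexc E (List.mem_cons_self ..)
    rcases L with _ | ⟨A, M⟩
    · rw [F_single]
      refine ⟨⟨hE.1.1, fun i => ?_⟩, by simpa using hE.2⟩
      have h1 := List.sum_take_add_sum_drop E i
      have h2 := hE.1.2 i
      have h3 := hE.2
      linarith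
    · have hL : (A :: M) ≠ [] := List.cons_ne_nil _ _
      obtain ⟨⟨hip, hsuf⟩, hsum⟩ := ih hL (fun E hE => hexc E (List.mem_cons_of_mem _ hE))
      rw [F_cons _ _ hL]
      refine ⟨⟨?_, ?_⟩, ?_⟩
      · intro s hs
        rcases List.mem_append.1 hs with h | h
        · exact hE.1.1 s h
        · rcases List.mem_cons.1 h with h | h
          · omega
          · exact hip s h
      · intro i
        rcases le_or_gt i E.length with hi | hi
        · have hd : (E ++ (-1 : ℤ) :: F (A :: M)).drop i = E.drop i ++ (-1 : ℤ) :: F (A :: M) := by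
            rw [List.drop_append_of_le_length hi]
          rw [hd, List.sum_append]
          have h1 := List.sum_take_add_sum_drop E i
          have h2 := hE.1.2 i
          have h3 := hE.2
          have h4 := hsuf 0
          simp only [List.drop_zero] at h4
          simp only [List.sum_cons]
          linarith
        · obtain ⟨j, rfl⟩ := Nat.exists_eq_add_of_le (le_of_lt hi)
          have hd : (E ++ (-1 : ℤ) :: F (A :: M)).drop (E.length + j) =
              ((-1 : ℤ) :: F (A :: M)).drop j := by simp [List.drop_append]
          rw [hd]
          rcases j with _ | j
          · have h4 := hsuf 0
            simp only [List.drop_zero] at h4 ⊢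
            simp only [List.sum_cons]; linarith
          · simpa using hsuf j
      · rw [List.sum_append, List.sum_cons, hsum, hE.2]
        simp only [List.length_cons]
        push_cast
        ring

lemma firstpass (E₁ E₂ Q₁ Q₂ : List ℤ) (h₁ : Excursion E₁) (h₂ : Excursion E₂)
    (h : E₁ ++ (-1 : ℤ) :: Q₁ = E₂ ++ (-1 : ℤ) :: Q₂) : E₁ = E₂ ∧ Q₁ = Q₂ := by
  have key : ∀ A B R S : List ℤ, Excursion A → Excursion B →
      A ++ (-1 : ℤ) :: R = B ++ (-1 : ℤ) :: S → ¬ (A.length < B.length) := by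
    intro A B R S hA hB heq hlt
    have h1 : ((A ++ (-1 : ℤ) :: R).take (A.length + 1)).sum = (A.sum) + (-1) := by
      have : (A ++ (-1 : ℤ) :: R).take (A.length + 1) = A ++ ((-1 : ℤ) :: R).take 1 := by
        simp [List.take_append]
      rw [this]; simp
    have h2 : (B ++ (-1 : ℤ) :: S).take (A.length + 1) = B.take (A.length + 1) :=
      List.take_append_of_le_length (by omega)
    have h3 := hB.1.2 (A.length + 1)
    rw [heq, h2] at h1
    rw [h1] at h3
    have := hA.2
    linarith
  have hlen : E₁.length = E₂.length := by
    rcases Nat.lt_trichotomy E₁.length E₂.length with h' | h' | h'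
    · exact absurd h' (key _ _ _ _ h₁ h₂ h)
    · exact h'
    · exact absurd h' (key _ _ _ _ h₂ h₁ h.symm)
  obtain ⟨hE, hrest⟩ := List.append_inj h hlen
  exact ⟨hE, by simpa using hrest⟩

lemma lemC : ∀ L₁ L₂ : List (List ℤ), (∀ E ∈ L₁, Excursion E) → (∀ E ∈ L₂, Excursion E) →
    L₁.length = L₂.length → L₁ ≠ [] → F L₁ = F L₂ → L₁ = L₂ := by
  intro L₁
  induction L₁ with
  | nil => intro _ _ _ _ h; exact absurd rfl h
  | cons E₁ M₁ ih =>
    intro L₂ hx₁ hx₂ hlen _ hF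
    rcases L₂ with _ | ⟨E₂, M₂⟩
    · simp at hlen
    · rcases M₁ with _ | ⟨A₁, N₁⟩
      · have : M₂ = [] := by simpa using hlen
        subst this
        rw [F_single, F_single] at hF
        rw [hF]
      · rcases M₂ with _ | ⟨A₂, N₂⟩
        · simp at hlen
        · rw [F_cons _ _ (List.cons_ne_nil _ _), F_cons _ _ (List.cons_ne_nil _ _)] at hF
          obtain ⟨hE, hQ⟩ := firstpass E₁ E₂ (F (A₁ :: N₁)) (F (A₂ :: N₂))
            (hx₁ E₁ (List.mem_cons_self ..)) (hx₂ E₂ (List.mem_cons_self ..)) hF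
          have := ih (A₂ :: N₂) (fun E hE => hx₁ E (List.mem_cons_of_mem _ hE))
            (fun E hE => hx₂ E (List.mem_cons_of_mem _ hE)) (by simpa using hlen)
            (List.cons_ne_nil _ _) hQ
          rw [hE, this]

lemma lemB : ∀ n : ℕ, ∀ P : List ℤ, RevNonnegPath P → P.sum = -(n : ℤ) →
    ∃ L : List (List ℤ), L.length = n + 1 ∧ (∀ E ∈ L, Excursion E) ∧ F L = P := by
  intro n
  induction n with
  | zero =>
    rintro P ⟨hip, hsuf⟩ hsum
    have hPexc : Excursion P := by
      refine ⟨⟨hip, fun i => ?_⟩, by simpa using hsum⟩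
      have h1 := List.sum_take_add_sum_drop P i
      have h2 := hsuf i
      simp at hsum
      linarith
    refine ⟨[P], rfl, ?_, F_single P⟩
    intro E hE
    simp only [List.mem_singleton] at hE
    exact hE ▸ hPexc
  | succ n ih =>
    rintro P ⟨hip, hsuf⟩ hsum
    have hpex : ((P.take P.length).sum < 0) := by
      rw [List.take_length, hsum]; push_cast; omega
    classical
    have hex : ∃ i, (P.take i).sum < 0 := ⟨P.length, hpex⟩
    have hkspec : (P.take (Nat.find hex)).sum < 0 := Nat.find_spec hex
    have hkmin : ∀ j < Nat.find hex, 0 ≤ (P.take j).sum := by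
      intro j hj
      have := Nat.find_min hex hj
      linarith [not_lt.1 this]
    have hkle : Nat.find hex ≤ P.length := Nat.find_le hpex
    have hk0 : Nat.find hex ≠ 0 := by
      intro h; rw [h] at hkspec; simp at hkspec
    obtain ⟨m, hkm⟩ : ∃ m, Nat.find hex = m + 1 := ⟨Nat.find hex - 1, by omega⟩
    rw [hkm] at hkspec hkmin hkle
    have hm : m < P.length := by omega
    have hstep : P.take (m + 1) = P.take m ++ [P[m]] := by
      rw [← List.take_concat_get hm]; simp
    have hsm : 0 ≤ (P.take m).sum := hkmin m (by omega)
    have hsget : (-1 : ℤ) ≤ P[m] := hip _ (List.getElem_mem ..)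
    have hsplit : (P.take m).sum + P[m] < 0 := by
      rw [hstep, List.sum_append, List.sum_singleton] at hkspec; exact hkspec
    have hE0 : (P.take m).sum = 0 := by omega
    have hg : P[m] = -1 := by omega
    have hPdecomp : P = P.take m ++ (-1 : ℤ) :: P.drop (m + 1) := by
      conv_lhs => rw [← List.take_append_drop m P]
      rw [List.drop_eq_getElem_cons hm, hg]
    -- the remainder
    have hRsum : (P.drop (m + 1)).sum = -(n : ℤ) := by
      have h1 := List.sum_take_add_sum_drop P (m + 1)
      have h2 : (P.take (m + 1)).sum = -1 := by
        rw [hstep]; simp [hE0, hg]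
      push_cast at hsum ⊢
      linarith
    have hRrev : RevNonnegPath (P.drop (m + 1)) := by
      refine ⟨fun s hs => hip s (List.mem_of_mem_drop hs), fun i => ?_⟩
      rw [List.drop_drop]
      exact hsuf _
    obtain ⟨L', hL'len, hL'exc, hL'F⟩ := ih _ hRrev hRsum
    refine ⟨P.take m :: L', by simp [hL'len], ?_, ?_⟩
    · intro E hE
      rcases List.mem_cons.1 hE with rfl | hE
      · refine ⟨⟨fun s hs => hip s (List.mem_of_mem_take hs), fun i => ?_⟩, hE0⟩
        rw [List.take_take]
        exact hkmin _ (by omega)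
      · exact hL'exc E hE
    · have hL'ne : L' ≠ [] := by intro h; rw [h] at hL'len; simp at hL'len
      rw [F_cons _ _ hL'ne, hL'F, ← hPdecomp]

theorem geode_stmt12 (n : ℕ) (P : List ℤ) :
    (RevNonnegPath P ∧ P.sum = -(n : ℤ)) ↔
      ∃! L : List (List ℤ), L.length = n + 1 ∧ (∀ E ∈ L, Excursion E) ∧
        (List.intersperse [(-1 : ℤ)] L).flatten = P := by
  constructor
  · rintro ⟨hrev, hsum⟩
    obtain ⟨L, hlen, hexc, hF⟩ := lemB n P hrev hsum
    refine ⟨L, ⟨hlen, hexc, hF⟩, ?_⟩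
    rintro L' ⟨hlen', hexc', hF'⟩
    exact lemC L' L hexc' hexc (by omega)
      (by intro h; rw [h] at hlen'; simp at hlen') (hF'.trans hF.symm : F L' = F L)
  · rintro ⟨L, ⟨hlen, hexc, hF⟩, -⟩
    have hne : L ≠ [] := by intro h; rw [h] at hlen; simp at hlen
    obtain ⟨hrev, hsum⟩ := lemA L hne hexc
    have : F L = P := hF
    rw [this] at hrev hsum
    refine ⟨hrev, by rw [hsum, hlen]; push_cast; ring⟩
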